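/- For every odd integer k ≥ 3, there exists a nonzero balanced kernel U such that t^{C_ℓ}_U(x) = 0 for every odd integer ℓ with 3 ≤ ℓ ≤ k and every x ∈ [0,1]. In particular, t(C_ℓ, U) = 0 for every odd integer ℓ with 3 ≤ ℓ ≤ k. -/

import Mathlib

open MeasureTheory

/-- A kernel: a bounded measurable symmetric real function (its values on `[0,1]²` are the
relevant ones). -/
structure Kernel : Type where
  toFun : ℝ → ℝ → ℝ
  symm : ∀ x y, toFun x y = toFun y x
  measurable : Measurable (Function.uncurry toFun)
  bounded : ∃ C : ℝ, ∀ x y, |toFun x y| ≤ C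

/-- A kernel is nonzero if it is not a.e. zero on `[0,1]²`. -/
def Kernel.Nonzero (U : Kernel) : Prop :=
  ¬ (∀ᵐ p : ℝ × ℝ ∂(volume.restrict ((Set.Icc (0:ℝ) 1) ×ˢ (Set.Icc (0:ℝ) 1))),
      U.toFun p.1 p.2 = 0)

/-- A kernel is balanced if its marginals vanish a.e. -/
def Kernel.Balanced (U : Kernel) : Prop :=
  ∀ᵐ x ∂(volume.restrict (Set.Icc (0:ℝ) 1)), (∫ y in Set.Icc (0:ℝ) 1, U.toFun x y) = 0

/-- The product of the kernel values over the edges of a graph. -/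
noncomputable def edgeProd {V : Type} (H : SimpleGraph V) (U : Kernel) (x : V → ℝ) : ℝ :=
  ∏ᶠ e ∈ H.edgeSet, Sym2.lift ⟨fun u v => U.toFun (x u) (x v), fun u v => U.symm (x u) (x v)⟩ e

/-- The homomorphism density `t(H, U)` of a finite simple graph in a kernel. -/
noncomputable def homDensity {V : Type} [Fintype V] (H : SimpleGraph V) (U : Kernel) : ℝ :=
  ∫ x in (Set.univ.pi fun _ : V => Set.Icc (0:ℝ) 1), edgeProd H U x

open Classical in
/-- The rooted homomorphism density `t^H_U(z)` of a graph `H` rooted at `w`. -/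
noncomputable def rootedDensity {V : Type} [Fintype V] (H : SimpleGraph V) (w : V)
    (U : Kernel) (z : ℝ) : ℝ :=
  ∫ x in (Set.univ.pi fun _ : {v : V // v ≠ w} => Set.Icc (0:ℝ) 1),
    edgeProd H U (fun v => if h : v = w then z else x ⟨v, h⟩)

/-- A bundled finite simple graph. -/
structure FinGraph : Type 1 where
  V : Type
  fintypeV : Fintype V
  G : SimpleGraph V

attribute [instance] FinGraph.fintypeV

def FinGraph.of {V : Type} [h : Fintype V] (G : SimpleGraph V) : FinGraph := ⟨V, h, G⟩

noncomputable def FinGraph.density (G : FinGraph) (U : Kernel) : ℝ := homDensity G.G U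

/-- Number of edges of a bundled finite graph. -/
noncomputable def FinGraph.edges (G : FinGraph) : ℕ := G.G.edgeSet.ncard

instance finiteSubgraph {V : Type} [Finite V] (G : SimpleGraph V) : Finite G.Subgraph := by
  classical
  exact Finite.of_injective (fun G' => (G'.verts, G'.Adj))
    (fun a b h => SimpleGraph.Subgraph.ext (congrArg Prod.fst h) (congrArg Prod.snd h))

open Classical in
/-- The multiset of all subgraphs of `G` having exactly `l` edges. -/
noncomputable def FinGraph.subs (G : FinGraph) (l : ℕ) : Multiset FinGraph :=
  ((Set.toFinite {G' : G.G.Subgraph | G'.edgeSet.ncard = l}).toFinset.val).map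
    fun G' => FinGraph.of G'.coe

/-- `D` is an `l`-deck: a multiset of graphs each with exactly `l` edges. -/
def IsDeck (D : Multiset FinGraph) (l : ℕ) : Prop := ∀ G ∈ D, G.edges = l

/-- The `l`-deck of a deck `D`: all `l`-edge subgraphs of the graphs of `D`. -/
noncomputable def subDeck (D : Multiset FinGraph) (l : ℕ) : Multiset FinGraph :=
  D.bind fun G => G.subs l

/-- `s_D(H)`: the number of subgraphs isomorphic to `H` of the graphs in `D`. -/
noncomputable def sD (D : Multiset FinGraph) (H : FinGraph) : ℕ :=
  (D.map fun G => Set.ncard {G' : G.G.Subgraph | Nonempty (G'.coe ≃g H.G)}).sum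

/-- The coefficient `c^D_{U,l} = Σ_{G ∈ D} Σ_{H' ∈ G[l]} t(H', U)`. -/
noncomputable def coeff (D : Multiset FinGraph) (U : Kernel) (l : ℕ) : ℝ :=
  ((subDeck D l).map fun H => H.density U).sum

/-- All the coefficients `c^D_{U,2}, c^D_{U,4}, …, c^D_{U,l}` vanish. -/
def AllCoeffZero (D : Multiset FinGraph) (U : Kernel) (l : ℕ) : Prop :=
  ∀ k, Even k → 0 < k → k ≤ l → coeff D U k = 0

/-- Among `c^D_{U,2}, c^D_{U,4}, …, c^D_{U,l}` not all vanish and the first nonzero one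
is positive. -/
def FirstNonzeroPos (D : Multiset FinGraph) (U : Kernel) (l : ℕ) : Prop :=
  ∃ k, Even k ∧ 0 < k ∧ k ≤ l ∧ 0 < coeff D U k ∧
    ∀ j, Even j → 0 < j → j < k → coeff D U j = 0

/-- Among `c^D_{U,2}, c^D_{U,4}, …, c^D_{U,l}` not all vanish and the first nonzero one
is negative. -/
def FirstNonzeroNeg (D : Multiset FinGraph) (U : Kernel) (l : ℕ) : Prop :=
  ∃ k, Even k ∧ 0 < k ∧ k ≤ l ∧ coeff D U k < 0 ∧
    ∀ j, Even j → 0 < j → j < k → coeff D U j = 0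

def ClassI (D : Multiset FinGraph) (l : ℕ) : Prop :=
  ∀ U : Kernel, U.Nonzero → FirstNonzeroPos D U l

def ClassII (D : Multiset FinGraph) (l : ℕ) : Prop :=
  ∃ U : Kernel, FirstNonzeroNeg D U l

def ClassIII (D : Multiset FinGraph) (l : ℕ) : Prop :=
  (∃ U : Kernel, U.Nonzero ∧ AllCoeffZero D U l) ∧
  ∀ U : Kernel, AllCoeffZero D U l ∨ FirstNonzeroPos D U l

/-- The cycle `C_n` as a bundled graph. -/
def cycleF (n : ℕ) : FinGraph := FinGraph.of (SimpleGraph.cycleGraph n)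

/-- The path `P_n` with `n` edges as a bundled graph. -/
def pathF (n : ℕ) : FinGraph := FinGraph.of (SimpleGraph.pathGraph (n+1))

/-- Gluing two graphs by identifying the vertex `v` of `G` with the vertex `w` of `H`. -/
def glue {V W : Type} (G : SimpleGraph V) (H : SimpleGraph W) (v : V) (w : W) :
    SimpleGraph (V ⊕ {x : W // x ≠ w}) where
  Adj a b :=
    Sum.elim (fun a => Sum.elim (fun b => G.Adj a b) (fun b => a = v ∧ H.Adj w b.1) b)
             (fun a => Sum.elim (fun b => b = v ∧ H.Adj w a.1) (fun b => H.Adj a.1 b.1) b) a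
  symm := by
    constructor
    rintro (a | a) (b | b) h
    · exact G.symm.symm _ _ h
    · exact h
    · exact h
    · exact H.symm.symm _ _ h
  loopless := by
    constructor
    rintro (a | a) h
    · exact G.loopless.irrefl a h
    · exact H.loopless.irrefl a.1 h

/-- Disjoint union of two simple graphs. -/
def disjSum {V W : Type} (G : SimpleGraph V) (H : SimpleGraph W) : SimpleGraph (V ⊕ W) where
  Adj a b :=
    Sum.elim (fun a => Sum.elim (fun b => G.Adj a b) (fun _ => False) b)
             (fun a => Sum.elim (fun _ => False) (fun b => H.Adj a b) b) a
  symm := by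
    constructor
    rintro (a | a) (b | b) h
    · exact G.symm.symm _ _ h
    · exact h.elim
    · exact h.elim
    · exact H.symm.symm _ _ h
  loopless := by
    constructor
    rintro (a | a) h
    · exact G.loopless.irrefl a h
    · exact H.loopless.irrefl a h

/-- Disjoint union `G ∪ H` of bundled graphs. -/
noncomputable def FinGraph.disjU (G H : FinGraph) : FinGraph := FinGraph.of (disjSum G.G H.G)

open Classical in
/-- `C_k ⊕ P_n ⊕ C_l`: two cycles joined by a path with `n` edges; for `n = 0` this is
`C_k ⊕ C_l`, two cycles sharing one vertex. (Junk value if `k = 0` or `l = 0`.) -/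
noncomputable def cpcF (k n l : ℕ) : FinGraph :=
  if h : 0 < k ∧ 0 < l then
    let A := glue (SimpleGraph.cycleGraph k) (SimpleGraph.pathGraph (n+1)) ⟨0, h.1⟩ 0
    let ep : Fin k ⊕ {x : Fin (n+1) // x ≠ 0} :=
      if hn : n = 0 then Sum.inl ⟨0, h.1⟩
      else Sum.inr ⟨Fin.last n, fun hc => hn (by simpa using congrArg Fin.val hc)⟩
    FinGraph.of (glue A (SimpleGraph.cycleGraph l) ep ⟨0, h.2⟩)
  else FinGraph.of (⊥ : SimpleGraph (Fin 0))


section Construction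

/-- A ±1-valued step function on `[0,1]` with zero integral on each half. -/
noncomputable def sgnStep (y : ℝ) : ℝ :=
  if y < 1/4 then 1 else if y < 1/2 then -1 else if y < 3/4 then 1 else -1

lemma sgnStep_eq (y : ℝ) : sgnStep y = 1 ∨ sgnStep y = -1 := by
  unfold sgnStep; split_ifs <;> simp

lemma sgnStep_measurable : Measurable sgnStep := by
  unfold sgnStep
  exact Measurable.ite measurableSet_Iio measurable_const
    (Measurable.ite measurableSet_Iio measurable_const
      (Measurable.ite measurableSet_Iio measurable_const measurable_const))

/-- The kernel function: supported on the "bipartite" cross region. -/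
noncomputable def Ufun (x y : ℝ) : ℝ :=
  if (x < 1/2 ↔ y < 1/2) then 0 else sgnStep x * sgnStep y

lemma Ufun_symm (x y : ℝ) : Ufun x y = Ufun y x :=
  if_congr Iff.comm rfl (mul_comm _ _)

lemma Ufun_measurable : Measurable (Function.uncurry Ufun) := by
  have hset : MeasurableSet {p : ℝ × ℝ | p.1 < 1/2 ↔ p.2 < 1/2} := by
    have : {p : ℝ × ℝ | p.1 < 1/2 ↔ p.2 < 1/2}
        = ({p : ℝ × ℝ | p.1 < 1/2} ∩ {p : ℝ × ℝ | p.2 < 1/2})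
          ∪ ({p : ℝ × ℝ | p.1 < 1/2}ᶜ ∩ {p : ℝ × ℝ | p.2 < 1/2}ᶜ) := by
      ext p; simp only [Set.mem_setOf_eq, Set.mem_union, Set.mem_inter_iff, Set.mem_compl_iff,
        Set.mem_setOf_eq]; tauto
    rw [this]
    exact ((measurableSet_lt measurable_fst measurable_const).inter
        (measurableSet_lt measurable_snd measurable_const)).union
      (((measurableSet_lt measurable_fst measurable_const).compl).inter
        ((measurableSet_lt measurable_snd measurable_const).compl))
  have : Function.uncurry Ufun = fun p : ℝ × ℝ =>
      if (p.1 < 1/2 ↔ p.2 < 1/2) then 0 else sgnStep p.1 * sgnStep p.2 := rfl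
  rw [this]
  exact Measurable.ite hset measurable_const
    ((sgnStep_measurable.comp measurable_fst).mul (sgnStep_measurable.comp measurable_snd))

lemma Ufun_bounded : ∃ C : ℝ, ∀ x y, |Ufun x y| ≤ C := by
  refine ⟨1, fun x y => ?_⟩
  unfold Ufun
  split_ifs with h
  · simp
  · rcases sgnStep_eq x with hx | hx <;> rcases sgnStep_eq y with hy | hy <;>
      rw [hx, hy] <;> norm_num

/-- The kernel. -/
noncomputable def myK : Kernel := ⟨Ufun, Ufun_symm, Ufun_measurable, Ufun_bounded⟩

lemma Ufun_cross {a b : ℝ} (h : Ufun a b ≠ 0) : ¬(a < 1/2 ↔ b < 1/2) := by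
  intro hc
  exact h (by unfold Ufun; rw [if_pos hc])

open Fin.NatCast Fin.CommRing in
lemma key_zero (l : ℕ) (hl : Odd l) (h3 : 3 ≤ l) (x : Fin l → ℝ) :
    edgeProd (SimpleGraph.cycleGraph l) myK x = 0 := by
  haveI : NeZero l := ⟨by omega⟩
  have hex : ∃ i : Fin l, Ufun (x i) (x (i + 1)) = 0 := by
    by_contra hc
    push_neg at hc
    set b : ℕ → Bool := fun j => decide (x ((j : Fin l)) < 1/2) with hbdef
    have hb : ∀ j : ℕ, b (j + 1) = !b j := by
      intro j
      have h1 := Ufun_cross (hc (j : Fin l))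
      have h2 : ((j + 1 : ℕ) : Fin l) = (j : Fin l) + 1 := by push_cast; ring
      simp only [hbdef, h2]
      by_cases hA : x ((j : Fin l)) < 1/2 <;> by_cases hB : x ((j : Fin l) + 1) < 1/2
      · exact absurd (iff_of_true hA hB) h1
      · rw [decide_eq_false hB, decide_eq_true hA]; rfl
      · rw [decide_eq_true hB, decide_eq_false hA]; rfl
      · exact absurd (iff_of_false hA hB) h1
    have hpar : ∀ j : ℕ, b j = xor (decide (Odd j)) (b 0) := by
      intro j
      induction j with
      | zero => simp
      | succ n ih =>
        rw [hb n, ih]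
        by_cases h : Odd n <;> simp [h, Nat.odd_add_one]
    have h0 : b l = b 0 := by simp [hbdef, Fin.natCast_self]
    rw [hpar l] at h0
    simp [hl] at h0
  obtain ⟨i, hi⟩ := hex
  unfold edgeProd
  rw [finprod_mem_eq_finite_toFinset_prod _ (Set.toFinite _)]
  refine Finset.prod_eq_zero (i := s(i, i + 1)) ?_ ?_
  · rw [Set.Finite.mem_toFinset, SimpleGraph.mem_edgeSet, SimpleGraph.cycleGraph_adj']
    right
    rw [add_sub_cancel_left, Fin.val_one']
    exact Nat.mod_eq_of_lt (by omega)
  · simpa [myK] using hi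

lemma Ufun_balanced (x : ℝ) : (∫ y in Set.Icc (0:ℝ) 1, Ufun x y) = 0 := by
  haveI : IsFiniteMeasure (volume.restrict (Set.Icc (0:ℝ) 1)) :=
    ⟨by rw [Measure.restrict_apply_univ]; simp [Real.volume_Icc]⟩
  by_cases hx : x < 1/2
  · have heq : Set.EqOn (fun y => Ufun x y)
        (fun y => (Set.Ico (1/2:ℝ) (3/4)).indicator (fun _ => sgnStep x) y
          + (Set.Icc (3/4:ℝ) 1).indicator (fun _ => -sgnStep x) y) (Set.Icc 0 1) := by
      intro y hy
      obtain ⟨hy0, hy1⟩ := hy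
      show Ufun x y = _
      beta_reduce
      by_cases h1 : y < 1/2
      · have e1 : Ufun x y = 0 := by unfold Ufun; rw [if_pos (iff_of_true hx h1)]
        have m1 : y ∉ Set.Ico (1/2:ℝ) (3/4) := fun hm => absurd hm.1 (by linarith)
        have m2 : y ∉ Set.Icc (3/4:ℝ) 1 := fun hm => absurd hm.1 (by linarith)
        rw [e1, Set.indicator_of_notMem m1, Set.indicator_of_notMem m2]; ring
      · have e0 : Ufun x y = sgnStep x * sgnStep y := by
          unfold Ufun; rw [if_neg (fun hc => h1 (hc.mp hx))]
        by_cases h2 : y < 3/4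
        · have es : sgnStep y = 1 := by
            unfold sgnStep; rw [if_neg (by linarith), if_neg h1, if_pos h2]
          have m1 : y ∈ Set.Ico (1/2:ℝ) (3/4) := ⟨by linarith, h2⟩
          have m2 : y ∉ Set.Icc (3/4:ℝ) 1 := fun hm => absurd hm.1 (by linarith)
          rw [e0, es, Set.indicator_of_mem m1, Set.indicator_of_notMem m2]; ring
        · have es : sgnStep y = -1 := by
            unfold sgnStep; rw [if_neg (by linarith), if_neg h1, if_neg h2]
          have m1 : y ∉ Set.Ico (1/2:ℝ) (3/4) := fun hm => absurd hm.2 h2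
          have m2 : y ∈ Set.Icc (3/4:ℝ) 1 := ⟨by linarith, hy1⟩
          rw [e0, es, Set.indicator_of_notMem m1, Set.indicator_of_mem m2]; ring
    rw [setIntegral_congr_fun measurableSet_Icc heq]
    rw [integral_add ((integrable_const _).indicator measurableSet_Ico)
        ((integrable_const _).indicator measurableSet_Icc)]
    rw [integral_indicator measurableSet_Ico, integral_indicator measurableSet_Icc]
    rw [Measure.restrict_restrict measurableSet_Ico, Measure.restrict_restrict measurableSet_Icc]
    have hs1 : Set.Ico (1/2:ℝ) (3/4) ∩ Set.Icc 0 1 = Set.Ico (1/2:ℝ) (3/4) := by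
      rw [Set.inter_eq_left]; intro y hy
      rw [Set.mem_Ico] at hy; exact ⟨by linarith [hy.1], by linarith [hy.2]⟩
    have hs2 : Set.Icc (3/4:ℝ) 1 ∩ Set.Icc 0 1 = Set.Icc (3/4:ℝ) 1 := by
      rw [Set.inter_eq_left]; intro y hy
      rw [Set.mem_Icc] at hy; exact ⟨by linarith [hy.1], hy.2⟩
    rw [hs1, hs2, setIntegral_const, setIntegral_const, Real.volume_real_Ico_of_le (by norm_num),
      Real.volume_real_Icc_of_le (by norm_num)]
    simp [smul_eq_mul]
    ring
  · have heq : Set.EqOn (fun y => Ufun x y)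
        (fun y => (Set.Ico (0:ℝ) (1/4)).indicator (fun _ => sgnStep x) y
          + (Set.Ico (1/4:ℝ) (1/2)).indicator (fun _ => -sgnStep x) y) (Set.Icc 0 1) := by
      intro y hy
      obtain ⟨hy0, hy1⟩ := hy
      show Ufun x y = _
      beta_reduce
      by_cases h1 : y < 1/2
      · have e0 : Ufun x y = sgnStep x * sgnStep y := by
          unfold Ufun; rw [if_neg (fun hc => hx (hc.mpr h1))]
        by_cases h2 : y < 1/4
        · have es : sgnStep y = 1 := by unfold sgnStep; rw [if_pos h2]
          have m1 : y ∈ Set.Ico (0:ℝ) (1/4) := ⟨hy0, h2⟩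
          have m2 : y ∉ Set.Ico (1/4:ℝ) (1/2) := fun hm => absurd hm.1 (by linarith)
          rw [e0, es, Set.indicator_of_mem m1, Set.indicator_of_notMem m2]; ring
        · have es : sgnStep y = -1 := by unfold sgnStep; rw [if_neg h2, if_pos h1]
          have m1 : y ∉ Set.Ico (0:ℝ) (1/4) := fun hm => absurd hm.2 h2
          have m2 : y ∈ Set.Ico (1/4:ℝ) (1/2) := ⟨by linarith, h1⟩
          rw [e0, es, Set.indicator_of_notMem m1, Set.indicator_of_mem m2]; ring
      · have e1 : Ufun x y = 0 := by unfold Ufun; rw [if_pos (iff_of_false hx h1)]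
        have m1 : y ∉ Set.Ico (0:ℝ) (1/4) := fun hm => absurd hm.2 (by linarith)
        have m2 : y ∉ Set.Ico (1/4:ℝ) (1/2) := fun hm => absurd hm.2 (by linarith)
        rw [e1, Set.indicator_of_notMem m1, Set.indicator_of_notMem m2]; ring
    rw [setIntegral_congr_fun measurableSet_Icc heq]
    rw [integral_add ((integrable_const _).indicator measurableSet_Ico)
        ((integrable_const _).indicator measurableSet_Ico)]
    rw [integral_indicator measurableSet_Ico, integral_indicator measurableSet_Ico]
    rw [Measure.restrict_restrict measurableSet_Ico, Measure.restrict_restrict measurableSet_Ico]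
    have hs1 : Set.Ico (0:ℝ) (1/4) ∩ Set.Icc 0 1 = Set.Ico (0:ℝ) (1/4) := by
      rw [Set.inter_eq_left]; intro y hy
      rw [Set.mem_Ico] at hy; exact ⟨hy.1, by linarith [hy.2]⟩
    have hs2 : Set.Ico (1/4:ℝ) (1/2) ∩ Set.Icc 0 1 = Set.Ico (1/4:ℝ) (1/2) := by
      rw [Set.inter_eq_left]; intro y hy
      rw [Set.mem_Ico] at hy; exact ⟨by linarith [hy.1], by linarith [hy.2]⟩
    rw [hs1, hs2, setIntegral_const, setIntegral_const, Real.volume_real_Ico_of_le (by norm_num),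
      Real.volume_real_Ico_of_le (by norm_num)]
    simp [smul_eq_mul]
    ring

lemma myK_nonzero : myK.Nonzero := by
  intro h
  rw [MeasureTheory.ae_iff,
    Measure.restrict_apply' (measurableSet_Icc.prod measurableSet_Icc)] at h
  have hsub : (Set.Ico (0:ℝ) (1/4)) ×ˢ (Set.Ico (1/2:ℝ) (3/4))
      ⊆ {p : ℝ × ℝ | ¬ myK.toFun p.1 p.2 = 0}
        ∩ ((Set.Icc (0:ℝ) 1) ×ˢ (Set.Icc (0:ℝ) 1)) := by
    rintro ⟨a, c⟩ ⟨ha, hc⟩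
    rw [Set.mem_Ico] at ha hc
    constructor
    · show ¬ Ufun a c = 0
      have e1 : sgnStep a = 1 := by unfold sgnStep; rw [if_pos (by linarith [ha.2])]
      have e2 : sgnStep c = 1 := by
        unfold sgnStep; rw [if_neg (by linarith [hc.1]), if_neg (by linarith [hc.1]),
          if_pos hc.2]
      unfold Ufun
      rw [if_neg (fun hiff => absurd (hiff.mp (by linarith [ha.2])) (by linarith [hc.1])),
        e1, e2]
      norm_num
    · exact ⟨⟨ha.1, by linarith [ha.2]⟩, ⟨by linarith [hc.1], by linarith [hc.2]⟩⟩
  have hle := measure_mono (μ := volume) hsub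
  rw [h, le_zero_iff, Measure.volume_eq_prod, Measure.prod_prod,
    Real.volume_Ico, Real.volume_Ico, mul_eq_zero] at hle
  rcases hle with h' | h' <;> rw [ENNReal.ofReal_eq_zero] at h' <;> norm_num at h'

end Construction


/-- For every odd `k ≥ 3`, there exists a nonzero balanced kernel `U` such that
the rooted density `t^{C_ℓ}_U(x)` vanishes for every odd `3 ≤ ℓ ≤ k` and every `x ∈ [0,1]`;
in particular `t(C_ℓ, U) = 0` for every odd `3 ≤ ℓ ≤ k`. -/
theorem core_cycle (k : ℕ) (hk : Odd k) (h3 : 3 ≤ k) :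
    ∃ U : Kernel, U.Nonzero ∧ U.Balanced ∧
      (∀ l : ℕ, ∀ _ : Odd l, ∀ _ : 3 ≤ l, ∀ _ : l ≤ k, ∀ x ∈ Set.Icc (0:ℝ) 1,
        rootedDensity (SimpleGraph.cycleGraph l) ⟨0, by omega⟩ U x = 0) ∧
      (∀ l : ℕ, Odd l → 3 ≤ l → l ≤ k →
        homDensity (SimpleGraph.cycleGraph l) U = 0) := by
  refine ⟨myK, myK_nonzero, ae_of_all _ (fun x => Ufun_balanced x), ?_, ?_⟩
  · intro l hl hl3 hlk x hx
    unfold rootedDensity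
    simp only [key_zero l hl hl3]
    simp
  · intro l hl hl3 hlk
    unfold homDensity
    simp only [key_zero l hl hl3]
    simp
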